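/- arXiv:1106.4912 — 4 statements merged into one kernel-verified Lean document; each statement's English description precedes it below -/
import Mathlib

section
/- Let R be a commutative ring and x, y ∈ R such that the ideal generated by x and y is the whole ring R. Let ρ be a unit of R and N ∈ ℕ. Then the ideal generated by x + ρ·y^N and x·y^N is the whole ring R. -/
/-- Let `R` be a commutative ring and `x, y ∈ R` generating the unit ideal. Let `ρ` be a
unit of `R` and `N ∈ ℕ`. Then `x + ρ * y ^ N` and `x * y ^ N` generate the unit ideal. -/
theorem stmt_3 (R : Type*) [CommRing R] (x y : R)
    (h : Ideal.span ({x, y} : Set R) = ⊤) (ρ : Rˣ) (N : ℕ) :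
    Ideal.span ({x + (ρ : R) * y ^ N, x * y ^ N} : Set R) = ⊤ := by
  set I := Ideal.span ({x + (ρ : R) * y ^ N, x * y ^ N} : Set R) with hI
  have hx2 : x ^ 2 ∈ I := by
    rw [hI, Ideal.mem_span_pair]
    exact ⟨x, -(ρ : R), by ring⟩
  have hy2 : y ^ (2 * N) ∈ I := by
    rw [hI, Ideal.mem_span_pair]
    refine ⟨(ρ⁻¹ : Rˣ) * y ^ N, -(ρ⁻¹ : Rˣ), ?_⟩
    have : ((ρ⁻¹ : Rˣ) : R) * (ρ : R) = 1 := by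
      rw [← Units.val_mul, inv_mul_cancel, Units.val_one]
    calc ((ρ⁻¹ : Rˣ) : R) * y ^ N * (x + (ρ : R) * y ^ N) + -((ρ⁻¹ : Rˣ) : R) * (x * y ^ N)
        = ((ρ⁻¹ : Rˣ) : R) * (ρ : R) * (y ^ N * y ^ N) := by ring
      _ = y ^ (2 * N) := by rw [this, one_mul, ← pow_add, two_mul]
  have hrad : I.radical = ⊤ := by
    rw [eq_top_iff, ← h, Ideal.span_le]
    rintro z (rfl | rfl)
    · exact ⟨2, hx2⟩
    · exact ⟨2 * N, hy2⟩
  exact Ideal.radical_eq_top.mp hrad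
end

section
/- Let K be a p-adic field with fixed uniformizer π, and let γ ∈ K^* be such that the diagonal quadratic form ⟨1, π, −γ, −π·γ⟩ is anisotropic over K. Let f ∈ K(t)^* be such that v_t(f) is odd. Then at least one of the two diagonal quadratic forms ⟨1, −γ, −t, −f, π, −π·γ, −π·t, −π·f⟩ and ⟨1, −γ, −t, −γ·f, π, −π·γ, −π·t, −π·γ·f⟩ is anisotropic over K(t). -/
/-- The diagonal quadratic form `⟨q 0, …, q (n-1)⟩` is isotropic over `F`:
there is a nonzero vector on which it vanishes. -/
def IsIsotropic {F : Type*} [CommRing F] {n : ℕ} (q : Fin n → F) : Prop :=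
  ∃ x : Fin n → F, x ≠ 0 ∧ ∑ i, q i * x i ^ 2 = 0

/-- The diagonal form `⟨1, a⟩ ⊗ ⟨1, b, c, d⟩ = ⟨1, b, c, d, a, a·b, a·c, a·d⟩`. -/
def form8 {F : Type*} [CommRing F] (a b c d : F) : Fin 8 → F :=
  ![1, b, c, d, a, a * b, a * c, a * d]

/-- The `t`-adic valuation on `K(t)` (order of vanishing at `t = 0`). -/
noncomputable def vt {K : Type*} [Field K] (f : RatFunc K) : ℤ :=
  (Polynomial.rootMultiplicity 0 f.num : ℤ) - (Polynomial.rootMultiplicity 0 f.denom : ℤ)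

open Polynomial

section Helpers

variable {K : Type*} [Field K]

lemma sq_coeff (p : K[X]) (m : ℕ) (h : ∀ j < m, p.coeff j = 0) :
    (∀ v < 2*m, (p*p).coeff v = 0) ∧ (p*p).coeff (2*m) = p.coeff m ^ 2 := by
  constructor
  · intro v hv
    rw [Polynomial.coeff_mul]
    apply Finset.sum_eq_zero
    rintro ⟨i, j⟩ hij
    rw [Finset.HasAntidiagonal.mem_antidiagonal] at hij
    rcases lt_or_ge i m with hi | hi
    · simp [h i hi]
    · have hj : j < m := by omega
      simp [h j hj]
  · rw [Polynomial.coeff_mul, Finset.sum_eq_single (m, m)]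
    · ring
    · rintro ⟨i, j⟩ hij hne
      rw [Finset.HasAntidiagonal.mem_antidiagonal] at hij
      rcases lt_or_ge i m with hi | hi
      · simp [h i hi]
      · rcases lt_or_ge j m with hj | hj
        · simp [h j hj]
        · exfalso; apply hne
          have hi' : i = m := by omega
          have hj' : j = m := by omega
          simp [hi', hj']
    · intro hmem
      exfalso; apply hmem
      rw [Finset.HasAntidiagonal.mem_antidiagonal]; omega


lemma keyA {n : ℕ} (q y : Fin n → K[X])
    (hq : ∀ a : Fin n → K, a ≠ 0 → ∑ i, (q i).coeff 0 * a i ^ 2 ≠ 0)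
    (hy : y ≠ 0) :
    ∃ m : ℕ, (∑ i, q i * y i ^ 2).coeff (2*m) ≠ 0 ∧
      ∀ k < 2*m, (∑ i, q i * y i ^ 2).coeff k = 0 := by
  classical
  set T : Finset (Fin n) := Finset.univ.filter (fun i => y i ≠ 0) with hT
  have hTne : T.Nonempty := by
    rcases Function.ne_iff.mp hy with ⟨i, hi⟩
    exact ⟨i, by simp only [hT, Finset.mem_filter, Finset.mem_univ, true_and]; simpa using hi⟩
  set m := T.inf' hTne (fun i => (y i).natTrailingDegree) with hm
  have hlow : ∀ i, ∀ j < m, (y i).coeff j = 0 := by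
    intro i j hj
    by_cases h0 : y i = 0
    · simp [h0]
    · apply Polynomial.coeff_eq_zero_of_lt_natTrailingDegree
      have : m ≤ (y i).natTrailingDegree := Finset.inf'_le _ (by simp [hT, h0])
      omega
  set a : Fin n → K := fun i => (y i).coeff m with ha
  have hane : a ≠ 0 := by
    obtain ⟨i, hiT, hieq⟩ := Finset.exists_mem_eq_inf' hTne (fun i => (y i).natTrailingDegree)
    have hyi : y i ≠ 0 := by simpa [hT] using hiT
    refine Function.ne_iff.mpr ⟨i, ?_⟩
    have h1 : a i = (y i).trailingCoeff := by
      rw [ha]; simp only []; rw [hm, hieq]; rfl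
    rw [h1]
    simpa using Polynomial.trailingCoeff_nonzero_iff_nonzero.mpr hyi
  have hterm_low : ∀ i, ∀ k < 2*m, (q i * y i ^ 2).coeff k = 0 := by
    intro i k hk
    rw [pow_two, Polynomial.coeff_mul]
    apply Finset.sum_eq_zero
    rintro ⟨u, v⟩ huv
    rw [Finset.HasAntidiagonal.mem_antidiagonal] at huv
    have hv : v < 2*m := by omega
    rw [(sq_coeff (y i) m (hlow i)).1 v hv, mul_zero]
  have hterm_top : ∀ i, (q i * y i ^ 2).coeff (2*m) = (q i).coeff 0 * a i ^ 2 := by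
    intro i
    rw [pow_two, Polynomial.coeff_mul, Finset.sum_eq_single (0, 2*m)]
    · rw [(sq_coeff (y i) m (hlow i)).2]
    · rintro ⟨u, v⟩ huv hne
      rw [Finset.HasAntidiagonal.mem_antidiagonal] at huv
      have hv : v < 2*m := by
        rcases Nat.eq_zero_or_pos u with h0 | h0
        · exfalso; apply hne; subst h0; simp at huv ⊢; omega
        · omega
      rw [(sq_coeff (y i) m (hlow i)).1 v hv, mul_zero]
    · intro hmem; exfalso; apply hmem; rw [Finset.HasAntidiagonal.mem_antidiagonal]; simp
  refine ⟨m, ?_, ?_⟩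
  · rw [Polynomial.finset_sum_coeff, Finset.sum_congr rfl (fun i _ => hterm_top i)]
    exact hq a hane
  · intro k hk
    rw [Polynomial.finset_sum_coeff]
    exact Finset.sum_eq_zero (fun i _ => hterm_low i k hk)

lemma minCoeff_unique {p : K[X]} {a b : ℕ} (ha1 : p.coeff a ≠ 0) (ha2 : ∀ k < a, p.coeff k = 0)
    (hb1 : p.coeff b ≠ 0) (hb2 : ∀ k < b, p.coeff k = 0) : a = b := by
  rcases lt_trichotomy a b with h | h | h
  · exact absurd (hb2 a h) ha1
  · exact h
  · exact absurd (ha2 b h) hb1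

lemma polyStage (π γ e : K) (G : K[X])
    (hA : ∀ a : Fin 4 → K, a ≠ 0 → a 0^2 - γ * a 1^2 + π * a 2^2 - π*γ*a 3^2 ≠ 0)
    (hB : ∀ a : Fin 4 → K, a ≠ 0 →
      a 0^2 + (e*G.coeff 0) * a 1^2 + π * a 2^2 + π*(e*G.coeff 0)*a 3^2 ≠ 0)
    (z : Fin 8 → K[X]) (hz : z ≠ 0)
    (heq : ∑ i, (![1, -C γ, -X, -(C e * (X*G)), C π, -(C π * C γ), -(C π * X),
        -(C π * (C e * (X*G)))] : Fin 8 → K[X]) i * z i ^ 2 = 0) :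
    False := by
  classical
  set qA : Fin 4 → K[X] := ![1, -C γ, C π, -(C π * C γ)] with hqAdef
  set qB : Fin 4 → K[X] := ![1, C e * G, C π, C π * (C e * G)] with hqBdef
  set zA : Fin 4 → K[X] := ![z 0, z 1, z 4, z 5] with hzAdef
  set zB : Fin 4 → K[X] := ![z 2, z 3, z 6, z 7] with hzBdef
  have e0 : (∑ i, (![1, -C γ, -X, -(C e * (X*G)), C π, -(C π * C γ), -(C π * X),
        -(C π * (C e * (X*G)))] : Fin 8 → K[X]) i * z i ^ 2)
      = 1 * z 0 ^ 2 + -C γ * z 1 ^ 2 + -X * z 2 ^ 2 + -(C e * (X*G)) * z 3 ^ 2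
        + C π * z 4 ^ 2 + -(C π * C γ) * z 5 ^ 2 + -(C π * X) * z 6 ^ 2
        + -(C π * (C e * (X*G))) * z 7 ^ 2 := by
    rw [Fin.sum_univ_eight]; rfl
  rw [e0] at heq
  have eA : (∑ i, qA i * zA i ^ 2)
      = 1 * z 0 ^ 2 + -C γ * z 1 ^ 2 + C π * z 4 ^ 2 + -(C π * C γ) * z 5 ^ 2 := by
    rw [hqAdef, hzAdef, Fin.sum_univ_four]; rfl
  have eB : (∑ i, qB i * zB i ^ 2)
      = 1 * z 2 ^ 2 + (C e * G) * z 3 ^ 2 + C π * z 6 ^ 2 + (C π * (C e * G)) * z 7 ^ 2 := by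
    rw [hqBdef, hzBdef, Fin.sum_univ_four]; rfl
  have hAB : (∑ i, qA i * zA i ^ 2) = X * (∑ i, qB i * zB i ^ 2) := by
    rw [eA, eB]
    linear_combination heq
  have hqA : ∀ a : Fin 4 → K, a ≠ 0 → ∑ i, (qA i).coeff 0 * a i ^ 2 ≠ 0 := by
    intro a ha h
    apply hA a ha
    have e1 : ∑ i, (qA i).coeff 0 * a i ^ 2
        = (1 : K[X]).coeff 0 * a 0 ^ 2 + (-C γ).coeff 0 * a 1 ^ 2
          + (C π).coeff 0 * a 2 ^ 2 + (-(C π * C γ)).coeff 0 * a 3 ^ 2 := by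
      rw [hqAdef, Fin.sum_univ_four]; rfl
    rw [e1] at h
    simp only [Polynomial.coeff_one_zero, Polynomial.coeff_neg, Polynomial.coeff_C_zero,
      Polynomial.mul_coeff_zero] at h
    linear_combination h
  have hqB : ∀ a : Fin 4 → K, a ≠ 0 → ∑ i, (qB i).coeff 0 * a i ^ 2 ≠ 0 := by
    intro a ha h
    apply hB a ha
    have e1 : ∑ i, (qB i).coeff 0 * a i ^ 2
        = (1 : K[X]).coeff 0 * a 0 ^ 2 + (C e * G).coeff 0 * a 1 ^ 2
          + (C π).coeff 0 * a 2 ^ 2 + (C π * (C e * G)).coeff 0 * a 3 ^ 2 := by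
      rw [hqBdef, Fin.sum_univ_four]; rfl
    rw [e1] at h
    simp only [Polynomial.coeff_one_zero, Polynomial.coeff_neg, Polynomial.coeff_C_zero,
      Polynomial.mul_coeff_zero] at h
    linear_combination h
  by_cases hzA0 : zA = 0
  · by_cases hzB0 : zB = 0
    · apply hz; funext i; fin_cases i
      · simpa [hzAdef] using congrFun hzA0 0
      · simpa [hzAdef] using congrFun hzA0 1
      · simpa [hzBdef] using congrFun hzB0 0
      · simpa [hzBdef] using congrFun hzB0 1
      · simpa [hzAdef] using congrFun hzA0 2
      · simpa [hzAdef] using congrFun hzA0 3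
      · simpa [hzBdef] using congrFun hzB0 2
      · simpa [hzBdef] using congrFun hzB0 3
    · obtain ⟨mB, hB1, _⟩ := keyA qB zB hqB hzB0
      have hA0 : (∑ i, qA i * zA i ^ 2) = 0 := by
        rw [hzA0]; simp
      rw [hA0] at hAB
      have : (X * (∑ i, qB i * zB i ^ 2)).coeff (2*mB+1) = 0 := by rw [← hAB]; simp
      rw [Polynomial.coeff_X_mul] at this
      exact hB1 this
  · by_cases hzB0 : zB = 0
    · obtain ⟨mA, hA1, _⟩ := keyA qA zA hqA hzA0
      have hB0 : (∑ i, qB i * zB i ^ 2) = 0 := by rw [hzB0]; simp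
      rw [hB0, mul_zero] at hAB
      rw [hAB] at hA1
      simp at hA1
    · obtain ⟨mA, hA1, hA2⟩ := keyA qA zA hqA hzA0
      obtain ⟨mB, hB1, hB2⟩ := keyA qB zB hqB hzB0
      have hX1 : (X * (∑ i, qB i * zB i ^ 2)).coeff (2*mB+1) ≠ 0 := by
        rw [Polynomial.coeff_X_mul]; exact hB1
      have hX2 : ∀ k < 2*mB+1, (X * (∑ i, qB i * zB i ^ 2)).coeff k = 0 := by
        intro k hk
        cases k with
        | zero => simp
        | succ j => rw [Polynomial.coeff_X_mul]; exact hB2 j (by omega)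
      rw [hAB] at hA1 hA2
      have := minCoeff_unique hA1 hA2 hX1 hX2
      omega

lemma clear_denoms {n : ℕ} (q : Fin n → K[X]) (y : Fin n → RatFunc K) (hy : y ≠ 0)
    (h : ∑ i, algebraMap K[X] (RatFunc K) (q i) * y i ^ 2 = 0) :
    ∃ z : Fin n → K[X], z ≠ 0 ∧ ∑ i, q i * z i ^ 2 = 0 := by
  classical
  set φ := algebraMap K[X] (RatFunc K) with hφ
  set D : K[X] := ∏ j, (y j).denom with hD
  set z : Fin n → K[X] := fun i => (y i).num * ∏ j ∈ Finset.univ.erase i, (y j).denom with hz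
  have hnum : ∀ i, φ ((y i).num) = y i * φ ((y i).denom) := by
    intro i
    have hd : φ ((y i).denom) ≠ 0 :=
      RatFunc.algebraMap_ne_zero (RatFunc.denom_ne_zero (y i))
    have h0 := RatFunc.num_div_denom (y i)
    rw [div_eq_iff hd] at h0
    exact h0
  have hφz : ∀ i, φ (z i) = φ D * y i := by
    intro i
    rw [hz]
    simp only [map_mul, map_prod]
    rw [hnum i, hD, map_prod]
    rw [← Finset.mul_prod_erase Finset.univ (fun j => φ ((y j).denom)) (Finset.mem_univ i)]
    ring
  refine ⟨z, ?_, ?_⟩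
  · obtain ⟨i, hi⟩ := Function.ne_iff.mp hy
    have hyi : y i ≠ 0 := by simpa using hi
    refine Function.ne_iff.mpr ⟨i, ?_⟩
    have : z i ≠ 0 := by
      rw [hz]
      apply mul_ne_zero (RatFunc.num_ne_zero hyi)
      exact Finset.prod_ne_zero_iff.mpr (fun j _ => RatFunc.denom_ne_zero (y j))
    simpa using this
  · apply RatFunc.algebraMap_injective K
    rw [map_zero, map_sum]
    have : ∀ i, φ (q i * z i ^ 2) = (φ D)^2 * (φ (q i) * y i ^ 2) := by
      intro i
      rw [map_mul, map_pow, hφz i]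
      ring
    rw [Finset.sum_congr rfl (fun i _ => this i), ← Finset.mul_sum, h, mul_zero]

lemma combine (π γ c : K) (hγ : γ ≠ 0) (hc : c ≠ 0)
    (h1 : IsIsotropic ![(1:K), c, π, π * c])
    (h2 : IsIsotropic ![(1:K), γ * c, π, π * (γ * c)]) :
    IsIsotropic ![(1:K), π, -γ, -(π * γ)] := by
  obtain ⟨x, hx0, hx⟩ := h1
  obtain ⟨w, hw0, hw⟩ := h2
  have ex : (1:K) * x 0 ^ 2 + c * x 1 ^ 2 + π * x 2 ^ 2 + π * c * x 3 ^ 2 = 0 := by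
    rw [← hx, Fin.sum_univ_four]; rfl
  have ew : (1:K) * w 0 ^ 2 + γ * c * w 1 ^ 2 + π * w 2 ^ 2 + π * (γ * c) * w 3 ^ 2 = 0 := by
    rw [← hw, Fin.sum_univ_four]; rfl
  have base : ∀ u v : K, ¬(u = 0 ∧ v = 0) → u ^ 2 + π * v ^ 2 = 0 →
      IsIsotropic ![(1:K), π, -γ, -(π * γ)] := by
    intro u v huv h
    refine ⟨![u, v, 0, 0], ?_, ?_⟩
    · intro hz
      exact huv ⟨by simpa using congrFun hz 0, by simpa using congrFun hz 1⟩
    · rw [Fin.sum_univ_four]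
      show (1:K) * u ^ 2 + π * v ^ 2 + -γ * 0 ^ 2 + -(π * γ) * 0 ^ 2 = 0
      linear_combination h
  by_cases hU : (w 1 ^ 2 + π * w 3 ^ 2) * (x 0 ^ 2 + π * x 2 ^ 2) = 0
  · rcases mul_eq_zero.mp hU with h | h
    · by_cases hw13 : w 1 = 0 ∧ w 3 = 0
      · by_cases hw02 : w 0 = 0 ∧ w 2 = 0
        · exact absurd (_root_.funext fun i => by fin_cases i <;>
            simp [hw13.1, hw13.2, hw02.1, hw02.2]) hw0
        · obtain ⟨e1, e3⟩ := hw13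
          refine base (w 0) (w 2) hw02 ?_
          rw [e1, e3] at ew
          linear_combination ew
      · exact base (w 1) (w 3) hw13 h
    · by_cases hx02 : x 0 = 0 ∧ x 2 = 0
      · by_cases hx13 : x 1 = 0 ∧ x 3 = 0
        · exact absurd (_root_.funext fun i => by fin_cases i <;>
            simp [hx02.1, hx02.2, hx13.1, hx13.2]) hx0
        · refine base (x 1) (x 3) hx13 ?_
          have hs : c * (x 1 ^ 2 + π * x 3 ^ 2) = 0 := by
            linear_combination ex - h
          rcases mul_eq_zero.mp hs with h' | h'
          · exact absurd h' hc
          · exact h'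
      · exact base (x 0) (x 2) hx02 h
  · set P := w 0 * x 1 - π * (w 2 * x 3) with hP
    set Q := w 0 * x 3 + w 2 * x 1 with hQ
    set P' := x 0 * w 1 - π * (x 2 * w 3) with hP'
    set Q' := x 0 * w 3 + x 2 * w 1 with hQ'
    refine ⟨![P * P' - π * (Q * Q'), P * Q' + Q * P',
        (w 1 ^ 2 + π * w 3 ^ 2) * (x 0 ^ 2 + π * x 2 ^ 2), 0], ?_, ?_⟩
    · intro hz
      exact hU (by simpa using congrFun hz 2)
    · rw [Fin.sum_univ_four]
      show (1:K) * (P * P' - π * (Q * Q')) ^ 2 + π * (P * Q' + Q * P') ^ 2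
          + -γ * ((w 1 ^ 2 + π * w 3 ^ 2) * (x 0 ^ 2 + π * x 2 ^ 2)) ^ 2
          + -(π * γ) * 0 ^ 2 = 0
      rw [hP, hQ, hP', hQ']
      linear_combination ((w 1 ^ 2 + π * w 3 ^ 2) * (x 0 ^ 2 + π * x 2 ^ 2) * (x 1 ^ 2 + π * x 3 ^ 2)) * ew
        - (γ * (w 1 ^ 2 + π * w 3 ^ 2) * (w 1 ^ 2 + π * w 3 ^ 2) * (x 0 ^ 2 + π * x 2 ^ 2)) * ex

lemma perEps (π γ e : K)
    (haniso : ¬ IsIsotropic ![(1:K), π, -γ, -(π*γ)])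
    (f : RatFunc K) (hf : f ≠ 0) (k : ℕ) (G : K[X])
    (hFG : f.num * f.denom = X ^ (2*k+1) * G)
    (hiso : IsIsotropic (form8 (algebraMap K (RatFunc K) π) (-(algebraMap K (RatFunc K) γ))
        (-RatFunc.X) (-(algebraMap K (RatFunc K) e * f)))) :
    IsIsotropic ![(1:K), e * G.coeff 0, π, π * (e * G.coeff 0)] := by
  classical
  by_contra hres
  obtain ⟨x, hx0, hx⟩ := hiso
  set φ := algebraMap K[X] (RatFunc K) with hφ
  have hdX : φ (f.denom) ≠ 0 := RatFunc.algebraMap_ne_zero (RatFunc.denom_ne_zero f)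
  have hXne : φ (X : K[X]) ≠ 0 := RatFunc.algebraMap_ne_zero Polynomial.X_ne_zero
  set r : RatFunc K := φ X ^ k / φ f.denom with hr
  have hrne : r ≠ 0 := div_ne_zero (pow_ne_zero _ hXne) hdX
  have hnum : φ f.num = f * φ f.denom := by
    have h0 := RatFunc.num_div_denom f
    rwa [div_eq_iff hdX] at h0
  have key : φ (X * G) * (φ X ^ k) ^ 2 = f * φ f.denom ^ 2 := by
    have h1 : (X * G) * ((X : K[X]) ^ k) ^ 2 = f.num * f.denom := by rw [hFG]; ring
    calc φ (X * G) * (φ X ^ k) ^ 2 = φ ((X * G) * ((X : K[X]) ^ k) ^ 2) := by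
          simp only [map_mul, map_pow]
      _ = φ (f.num * f.denom) := by rw [h1]
      _ = f * φ f.denom ^ 2 := by rw [map_mul, hnum]; ring
  have hfeq : f = φ (X * G) * r ^ 2 := by
    rw [hr, div_pow, mul_div_assoc', eq_comm, div_eq_iff (pow_ne_zero _ hdX)]
    linear_combination key
  set y : Fin 8 → RatFunc K := ![x 0, x 1, x 2, r * x 3, x 4, x 5, x 6, r * x 7] with hy
  have hy0 : y ≠ 0 := by
    obtain ⟨i, hi⟩ := Function.ne_iff.mp hx0
    have hxi : x i ≠ 0 := by simpa using hi
    apply Function.ne_iff.mpr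
    fin_cases i
    · exact ⟨0, show y 0 ≠ 0 from hxi⟩
    · exact ⟨1, show y 1 ≠ 0 from hxi⟩
    · exact ⟨2, show y 2 ≠ 0 from hxi⟩
    · exact ⟨3, show y 3 ≠ 0 from mul_ne_zero hrne hxi⟩
    · exact ⟨4, show y 4 ≠ 0 from hxi⟩
    · exact ⟨5, show y 5 ≠ 0 from hxi⟩
    · exact ⟨6, show y 6 ≠ 0 from hxi⟩
    · exact ⟨7, show y 7 ≠ 0 from mul_ne_zero hrne hxi⟩
  set q : Fin 8 → K[X] := ![1, -C γ, -X, -(C e * (X*G)), C π, -(C π * C γ), -(C π * X),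
      -(C π * (C e * (X*G)))] with hq
  have exx : ∑ i, form8 (algebraMap K (RatFunc K) π) (-(algebraMap K (RatFunc K) γ))
        (-RatFunc.X) (-(algebraMap K (RatFunc K) e * f)) i * x i ^ 2
      = 1 * x 0 ^ 2 + (-(algebraMap K (RatFunc K) γ)) * x 1 ^ 2 + (-RatFunc.X) * x 2 ^ 2
        + (-(algebraMap K (RatFunc K) e * f)) * x 3 ^ 2
        + (algebraMap K (RatFunc K) π) * x 4 ^ 2
        + (algebraMap K (RatFunc K) π * -(algebraMap K (RatFunc K) γ)) * x 5 ^ 2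
        + (algebraMap K (RatFunc K) π * -RatFunc.X) * x 6 ^ 2
        + (algebraMap K (RatFunc K) π * -(algebraMap K (RatFunc K) e * f)) * x 7 ^ 2 := by
    simp only [form8]
    rw [Fin.sum_univ_eight]; rfl
  rw [exx] at hx
  have hsum : ∑ i, φ (q i) * y i ^ 2 = 0 := by
    have egoal : ∑ i, φ (q i) * y i ^ 2
        = φ 1 * x 0 ^ 2 + φ (-C γ) * x 1 ^ 2 + φ (-X) * x 2 ^ 2
          + φ (-(C e * (X*G))) * (r * x 3) ^ 2 + φ (C π) * x 4 ^ 2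
          + φ (-(C π * C γ)) * x 5 ^ 2 + φ (-(C π * X)) * x 6 ^ 2
          + φ (-(C π * (C e * (X*G)))) * (r * x 7) ^ 2 := by
      rw [Fin.sum_univ_eight]; rfl
    rw [egoal]
    rw [hfeq] at hx
    simp only [map_neg, map_mul, map_one, map_pow, hφ, RatFunc.algebraMap_C,
      RatFunc.algebraMap_X, RatFunc.algebraMap_eq_C] at hx ⊢
    linear_combination hx
  obtain ⟨z, hz0, hzeq⟩ := clear_denoms q y hy0 hsum
  apply polyStage π γ e G ?_ ?_ z hz0 (by rw [← hq]; exact hzeq)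
  · intro a ha h
    apply haniso
    refine ⟨![a 0, a 2, a 1, a 3], ?_, ?_⟩
    · obtain ⟨i, hi⟩ := Function.ne_iff.mp ha
      have hai : a i ≠ 0 := by simpa using hi
      apply Function.ne_iff.mpr
      fin_cases i
      · exact ⟨0, by simpa using hai⟩
      · exact ⟨2, by simpa using hai⟩
      · exact ⟨1, by simpa using hai⟩
      · exact ⟨3, by simpa using hai⟩
    · rw [Fin.sum_univ_four]
      show (1:K) * a 0 ^ 2 + π * a 2 ^ 2 + -γ * a 1 ^ 2 + -(π * γ) * a 3 ^ 2 = 0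
      linear_combination h
  · intro a ha h
    apply hres
    refine ⟨a, ha, ?_⟩
    rw [Fin.sum_univ_four]
    show (1:K) * a 0 ^ 2 + (e * G.coeff 0) * a 1 ^ 2 + π * a 2 ^ 2
      + (π * (e * G.coeff 0)) * a 3 ^ 2 = 0
    linear_combination h

end Helpers

/-- Theorem `oneoftwoanisotropic`: let `K` be a p-adic field with uniformizer `π` and
`γ ∈ K^*` with `⟨1, π, -γ, -π·γ⟩` anisotropic over `K`. If `f ∈ K(t)^*` has odd `t`-adic
valuation, then at least one of `⟨1,π⟩⊗⟨1,-γ,-t,-f⟩` and `⟨1,π⟩⊗⟨1,-γ,-t,-γ·f⟩` is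
anisotropic over `K(t)`. -/
theorem stmt_10 (p : ℕ) [Fact p.Prime]
    (K : Type*) [Field K] [Algebra ℚ_[p] K] [FiniteDimensional ℚ_[p] K]
    (v : K → ℤ)
    (hv_mul : ∀ x y : K, x ≠ 0 → y ≠ 0 → v (x * y) = v x + v y)
    (hv_add : ∀ x y : K, x ≠ 0 → y ≠ 0 → x + y ≠ 0 → min (v x) (v y) ≤ v (x + y))
    (hv_int : ∀ z : ℤ_[p], z ≠ 0 → 0 ≤ v (algebraMap ℚ_[p] K (z : ℚ_[p])))
    (π : K) (hπ0 : π ≠ 0) (hπ1 : v π = 1)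
    (γ : K) (hγ : γ ≠ 0)
    (haniso : ¬ IsIsotropic ![(1 : K), π, -γ, -(π * γ)])
    (f : RatFunc K) (hf : f ≠ 0) (hodd : Odd (vt f)) :
    ¬ IsIsotropic (form8 (algebraMap K (RatFunc K) π) (-(algebraMap K (RatFunc K) γ))
        (-RatFunc.X) (-f)) ∨
      ¬ IsIsotropic (form8 (algebraMap K (RatFunc K) π) (-(algebraMap K (RatFunc K) γ))
        (-RatFunc.X) (-(algebraMap K (RatFunc K) γ * f))) := by
  by_contra hcon
  push_neg at hcon
  obtain ⟨h1, h2⟩ := hcon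
  have hnum0 : f.num ≠ 0 := RatFunc.num_ne_zero hf
  have hden0 : f.denom ≠ 0 := RatFunc.denom_ne_zero f
  have hoddN : ∃ k : ℕ, f.num.natTrailingDegree + f.denom.natTrailingDegree = 2*k+1 := by
    obtain ⟨c, hc⟩ := hodd
    unfold vt at hc
    rw [Polynomial.rootMultiplicity_eq_natTrailingDegree',
      Polynomial.rootMultiplicity_eq_natTrailingDegree'] at hc
    refine ⟨(f.num.natTrailingDegree + f.denom.natTrailingDegree - 1) / 2, ?_⟩
    omega
  obtain ⟨k, hk⟩ := hoddN
  have hτ : (f.num * f.denom).natTrailingDegree = 2*k+1 := by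
    rw [Polynomial.natTrailingDegree_mul hnum0 hden0, hk]
  have hdvd : (X : Polynomial K)^(2*k+1) ∣ f.num * f.denom := by
    rw [Polynomial.X_pow_dvd_iff]
    intro d hd
    exact Polynomial.coeff_eq_zero_of_lt_natTrailingDegree (by omega)
  obtain ⟨G, hFG⟩ := hdvd
  have hc0 : G.coeff 0 ≠ 0 := by
    have hne : f.num * f.denom ≠ 0 := mul_ne_zero hnum0 hden0
    have he1 : (f.num * f.denom).coeff (2*k+1) = G.coeff 0 := by
      rw [hFG]
      simpa using Polynomial.coeff_X_pow_mul G (2*k+1) 0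
    rw [← he1]
    have htc := Polynomial.trailingCoeff_nonzero_iff_nonzero.mpr hne
    rwa [Polynomial.trailingCoeff, hτ] at htc
  have h1' : IsIsotropic (form8 (algebraMap K (RatFunc K) π) (-(algebraMap K (RatFunc K) γ))
      (-RatFunc.X) (-(algebraMap K (RatFunc K) 1 * f))) := by
    rw [map_one, one_mul]
    exact h1
  have r1 := perEps π γ 1 haniso f hf k G hFG h1'
  have r2 := perEps π γ γ haniso f hf k G hFG h2
  rw [one_mul] at r1
  exact haniso (combine π γ (G.coeff 0) hγ hc0 r1 r2)
end

section
/- Let K be a p-adic field and let x, y ∈ K(t) satisfy y² = x³ − x. Then x and y are constant, i.e. x ∈ K and y ∈ K (under the natural embedding of K into K(t)). -/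
open Polynomial UniqueFactorizationMonoid UniqueFactorizationDomain

/-- If `A * W = B ^ 2` with `A, W` coprime, then `A` is associated to a square, hence
the degree of its radical is at most half its degree. -/
lemma aux_radical_le {K : Type*} [Field K] [DecidableEq K] {A W B : K[X]}
    (hA : A ≠ 0) (hcop : IsCoprime A W) (hsq : A * W = B ^ 2) :
    2 * (radical A).natDegree ≤ A.natDegree := by
  obtain ⟨d, hd⟩ := exists_associated_pow_of_mul_eq_pow' hcop hsq
  have hd0 : d ≠ 0 := by
    rintro rfl
    rw [zero_pow (two_ne_zero)] at hd
    exact hA ((associated_zero_iff_eq_zero A).mp hd.symm)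
  have h1 : radical A = radical d := by
    rw [← radical_eq_of_associated hd, radical_pow d (by norm_num)]
  have h2 : A.natDegree = 2 * d.natDegree := by
    have hdeg := Polynomial.natDegree_eq_of_degree_eq
      (Polynomial.degree_eq_degree_of_associated hd)
    rw [natDegree_pow] at hdeg
    omega
  have h3 : (radical d).natDegree ≤ d.natDegree :=
    Polynomial.natDegree_le_of_dvd (radical_dvd_self (a := d)) hd0
  rw [h1]
  omega

/-- Let `K` be a p-adic field and `x, y ∈ K(t)` with `y² = x³ - x`. Then `x` and `y` are
constants, i.e. lie in the image of `K` in `K(t)`. -/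
theorem stmt_14 (p : ℕ) [Fact p.Prime]
    (K : Type*) [Field K] [Algebra ℚ_[p] K] [FiniteDimensional ℚ_[p] K]
    (x y : RatFunc K) (h : y ^ 2 = x ^ 3 - x) :
    (∃ a : K, x = algebraMap K (RatFunc K) a) ∧
      (∃ b : K, y = algebraMap K (RatFunc K) b) := by
  letI : DecidableEq K := Classical.decEq K
  have hchar : CharZero K := charZero_of_injective_algebraMap (algebraMap ℚ_[p] K).injective
  set A := x.num with hA
  set C := x.denom with hC
  set B := y.num with hB
  set E := y.denom with hE
  have hC0 : C ≠ 0 := x.denom_ne_zero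
  have hE0 : E ≠ 0 := y.denom_ne_zero
  have hCm : C.Monic := x.monic_denom
  have hEm : E.Monic := y.monic_denom
  have hxc : IsCoprime A C := x.isCoprime_num_denom
  have hyc : IsCoprime B E := y.isCoprime_num_denom
  set φ := algebraMap K[X] (RatFunc K) with hφ
  have hAx : φ A = x * φ C := by
    conv_rhs => rw [← RatFunc.num_div_denom x]
    rw [div_mul_cancel₀ _ (RatFunc.algebraMap_ne_zero hC0)]
  have hBy : φ B = y * φ E := by
    conv_rhs => rw [← RatFunc.num_div_denom y]
    rw [div_mul_cancel₀ _ (RatFunc.algebraMap_ne_zero hE0)]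
  have key : B ^ 2 * C ^ 3 = (A ^ 3 - A * C ^ 2) * E ^ 2 := by
    apply RatFunc.algebraMap_injective K
    simp only [map_mul, map_pow, map_sub, ← hφ, hAx, hBy]
    linear_combination (φ C) ^ 3 * (φ E) ^ 2 * h
  set S := A ^ 2 - C ^ 2 with hS
  -- coprimalities
  have hAS : IsCoprime A S := by
    have h0 : IsCoprime A (S + A * (-A)) := by
      rw [show S + A * (-A) = -(C ^ 2) by rw [hS]; ring]
      exact hxc.pow_right.neg_right
    exact h0.of_add_mul_left_right
  have hSC : IsCoprime S C := by
    have h0 : IsCoprime (S + C * C) C := by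
      rw [show S + C * C = A ^ 2 by rw [hS]; ring]
      exact hxc.pow_left
    exact h0.of_add_mul_left_left
  -- E ^ 2 = C ^ 3
  have key2 : B ^ 2 * C ^ 3 = (A * S) * E ^ 2 := by rw [key, hS]; ring
  have h1 : C ^ 3 ∣ E ^ 2 := by
    have hd : C ^ 3 ∣ (A * S) * E ^ 2 := ⟨B ^ 2, by linear_combination -key2⟩
    exact ((IsCoprime.mul_left hxc hSC).symm.pow_left).dvd_of_dvd_mul_left hd
  have h2 : E ^ 2 ∣ C ^ 3 := by
    have hd : E ^ 2 ∣ B ^ 2 * C ^ 3 := ⟨A * S, by linear_combination key2⟩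
    exact (hyc.symm.pow).dvd_of_dvd_mul_left hd
  have hEC : E ^ 2 = C ^ 3 :=
    Polynomial.eq_of_monic_of_associated (hEm.pow 2) (hCm.pow 3) (associated_of_dvd_dvd h2 h1)
  have key3 : B ^ 2 = A * S := by
    have h' : B ^ 2 * C ^ 3 = (A * S) * C ^ 3 := by rw [key2, hEC]
    exact mul_right_cancel₀ (pow_ne_zero _ hC0) h'
  -- C is a square
  have hCE : C ∣ E := by
    have hdd : C ^ 2 ∣ E ^ 2 := (pow_dvd_pow C (by norm_num)).trans h1
    exact (IsIntegrallyClosed.pow_dvd_pow_iff two_ne_zero).mp hdd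
  obtain ⟨D, hD⟩ := hCE
  have hCD : C = D ^ 2 := by
    have h' : C ^ 2 * C = C ^ 2 * D ^ 2 := by
      linear_combination (E + C * D) * hD - hEC
    exact (mul_left_cancel₀ (pow_ne_zero 2 hC0) h')
  -- main degree claim
  have main : A.natDegree = 0 ∧ C.natDegree = 0 := by
    by_cases hA0 : A = 0
    · have hx0 : x = 0 := RatFunc.num_eq_zero_iff.mp (by rw [← hA]; exact hA0)
      constructor
      · rw [hA0, natDegree_zero]
      · rw [hC, hx0, RatFunc.denom_zero, natDegree_one]
    by_cases hS0 : S = 0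
    · have hAC : A ^ 2 = C ^ 2 := by rw [hS] at hS0; linear_combination hS0
      have hdvd : A ∣ C ^ 2 := ⟨A, by linear_combination -hAC⟩
      have hAu : IsUnit A := (hxc.pow_right (n := 2)).isUnit_of_dvd' (dvd_refl A) hdvd
      have hnA : A.natDegree = 0 := Polynomial.natDegree_eq_zero_of_isUnit hAu
      have hnC : C.natDegree = 0 := by
        have : (C ^ 2).natDegree = (A ^ 2).natDegree := by rw [hAC]
        rw [natDegree_pow, natDegree_pow] at this
        omega
      exact ⟨hnA, hnC⟩
    -- nondegenerate case : apply Mason–Stothers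
    have hA2 : A ^ 2 ≠ 0 := pow_ne_zero _ hA0
    have hC2 : -(C ^ 2) ≠ 0 := neg_ne_zero.mpr (pow_ne_zero _ hC0)
    have hS2 : C ^ 2 - A ^ 2 ≠ 0 := by
      intro h0
      apply hS0
      rw [hS]
      linear_combination -h0
    have cop1 : IsCoprime (A ^ 2) (-(C ^ 2)) := hxc.pow.neg_right
    have cop2 : IsCoprime (-(C ^ 2)) (C ^ 2 - A ^ 2) := by
      have h0 : IsCoprime (-(C ^ 2)) ((C ^ 2 - A ^ 2) + -(C ^ 2) * 1) := by
        rw [show (C ^ 2 - A ^ 2) + -(C ^ 2) * 1 = -(A ^ 2) by ring]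
        exact (hxc.symm.pow).neg_left.neg_right
      exact h0.of_add_mul_left_right
    have cop3 : IsCoprime (C ^ 2 - A ^ 2) (A ^ 2) := by
      have h0 : IsCoprime ((C ^ 2 - A ^ 2) + A ^ 2 * 1) (A ^ 2) := by
        rw [show (C ^ 2 - A ^ 2) + A ^ 2 * 1 = C ^ 2 by ring]
        exact hxc.symm.pow
      exact h0.of_add_mul_left_left
    rcases Polynomial.abc hA2 hC2 hS2 cop1 (by ring) with ⟨i1, i2, i3⟩ | ⟨d1, d2, _⟩
    · exfalso
      have bA : 2 * (radical A).natDegree ≤ A.natDegree :=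
        aux_radical_le hA0 hAS key3.symm
      have bS : 2 * (radical S).natDegree ≤ S.natDegree := by
        have hsq : S * A = B ^ 2 := by linear_combination -key3
        exact aux_radical_le hS0 hAS.symm hsq
      have bC : 2 * (radical C).natDegree ≤ C.natDegree := by
        have hsq : C * 1 = D ^ 2 := by rw [mul_one]; exact hCD
        exact aux_radical_le hC0 isCoprime_one_right hsq
      have e1 : radical (A ^ 2 * -(C ^ 2) * (C ^ 2 - A ^ 2)) =
          radical A * radical C * radical S := by
        rw [radical_mul (IsCoprime.mul_left cop3.symm cop2).isRelPrime, radical_mul cop1.isRelPrime]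
        rw [radical_pow A (by norm_num), radical_neg, radical_pow C (by norm_num),
          show C ^ 2 - A ^ 2 = -S by rw [hS]; ring, radical_neg]
      have hrad : (radical (A ^ 2 * -(C ^ 2) * (C ^ 2 - A ^ 2))).natDegree =
          (radical A).natDegree + (radical C).natDegree + (radical S).natDegree := by
        rw [e1, Polynomial.natDegree_mul (mul_ne_zero (radical_ne_zero (a := A)) (radical_ne_zero (a := C)))
          (radical_ne_zero (a := S)), Polynomial.natDegree_mul (radical_ne_zero (a := A)) (radical_ne_zero (a := C))]
      rw [hrad] at i1 i2 i3
      rw [natDegree_pow] at i1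
      rw [natDegree_neg, natDegree_pow] at i2
      rw [show C ^ 2 - A ^ 2 = -S by rw [hS]; ring, natDegree_neg] at i3
      omega
    · have hnA : A.natDegree = 0 := by
        have := natDegree_eq_zero_of_derivative_eq_zero d1
        rw [natDegree_pow] at this
        omega
      have hnC : C.natDegree = 0 := by
        have hd2' : derivative (C ^ 2) = 0 := by
          have : derivative (-(C ^ 2)) = - derivative (C ^ 2) := by simp
          rw [this] at d2
          exact neg_eq_zero.mp d2
        have := natDegree_eq_zero_of_derivative_eq_zero hd2'
        rw [natDegree_pow] at this
        omega
      exact ⟨hnA, hnC⟩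
  obtain ⟨hnA, hnC⟩ := main
  have hC1 : C = 1 := hCm.natDegree_eq_zero.mp hnC
  -- x is constant
  have hxconst : ∃ a : K, x = algebraMap K (RatFunc K) a := by
    refine ⟨A.coeff 0, ?_⟩
    have hAc : A = Polynomial.C (A.coeff 0) := eq_C_of_natDegree_eq_zero hnA
    rw [← RatFunc.num_div_denom x, ← hA, ← hC, hC1, map_one, div_one, hAc,
      RatFunc.algebraMap_C, RatFunc.algebraMap_eq_C, Polynomial.coeff_C_zero]
  -- y is constant
  have hnB : B.natDegree = 0 := by
    have hSdeg : S.natDegree = 0 := by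
      have h1' : (A ^ 2).natDegree = 0 := by rw [natDegree_pow]; omega
      have h2' : (C ^ 2).natDegree = 0 := by rw [natDegree_pow]; omega
      have := natDegree_sub_le (A ^ 2) (C ^ 2)
      rw [hS]
      omega
    have : (B ^ 2).natDegree = 0 := by
      rw [key3]
      have := natDegree_mul_le (p := A) (q := S)
      omega
    rw [natDegree_pow] at this
    omega
  have hE1 : E = 1 := by
    apply hEm.natDegree_eq_zero.mp
    have : (E ^ 2).natDegree = (C ^ 3).natDegree := by rw [hEC]
    rw [natDegree_pow, natDegree_pow] at this
    omega
  have hyconst : ∃ b : K, y = algebraMap K (RatFunc K) b := by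
    refine ⟨B.coeff 0, ?_⟩
    have hBc : B = Polynomial.C (B.coeff 0) := eq_C_of_natDegree_eq_zero hnB
    rw [← RatFunc.num_div_denom y, ← hB, ← hE, hE1, map_one, div_one, hBc,
      RatFunc.algebraMap_C, RatFunc.algebraMap_eq_C, Polynomial.coeff_C_zero]
  exact ⟨hxconst, hyconst⟩
end

section
/- Let K be a p-adic field. Then, inside K(t), the set of constants equals the following set: K = { y₁/y₂ : y₁, y₂ ∈ K(t), y₂ ≠ 0, and there exist x₁, x₂ ∈ K(t) with y₁² = x₁³ − x₁ and y₂² = x₂³ − x₂ }. In particular, K is a diophantine subset of K(t). -/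
open Polynomial UniqueFactorizationMonoid UniqueFactorizationDomain Filter

set_option maxHeartbeats 1000000
set_option linter.unusedSectionVars false

section MasonStothers

variable {k : Type*} [Field k] [CharZero k] [DecidableEq k]

-- square root of a constant in RatFunc is constant
lemma sq_const {y : RatFunc k} {e : k} (h : y ^ 2 = algebraMap k (RatFunc k) e) :
    y ∈ Set.range (algebraMap k (RatFunc k)) := by
  rcases eq_or_ne y 0 with rfl | hy
  · exact ⟨0, by simp⟩
  set c := y.num with hc
  set d := y.denom with hd
  have hdne : d ≠ 0 := y.denom_ne_zero
  have hcne : c ≠ 0 := RatFunc.num_ne_zero hy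
  have hcop : IsCoprime c d := y.isCoprime_num_denom
  have hy' : algebraMap k[X] (RatFunc k) c / algebraMap k[X] (RatFunc k) d = y :=
    y.num_div_denom
  have hde : algebraMap k[X] (RatFunc k) d ≠ 0 := by
    simpa using (RatFunc.algebraMap_ne_zero hdne)
  have halgC : ∀ a : k, algebraMap k[X] (RatFunc k) (Polynomial.C a)
      = algebraMap k (RatFunc k) a := by
    intro a; rw [RatFunc.algebraMap_C, RatFunc.algebraMap_eq_C]
  have key : algebraMap k[X] (RatFunc k) (c ^ 2) =
      algebraMap k[X] (RatFunc k) (Polynomial.C e * d ^ 2) := by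
    rw [← hy'] at h
    field_simp at h
    rw [map_mul, map_pow, map_pow, h, halgC, RatFunc.algebraMap_eq_C]
    ring
  have key2 : c ^ 2 = Polynomial.C e * d ^ 2 := RatFunc.algebraMap_injective k key
  have hdvd : d ∣ c ^ 2 := ⟨Polynomial.C e * d, by rw [key2]; ring⟩
  have hunit : IsUnit d := (hcop.symm.pow_right (n := 2)).isUnit_of_dvd' dvd_rfl hdvd
  obtain ⟨u, hu⟩ := hunit
  have hdd : d.natDegree = 0 := by rw [← hu]; exact Polynomial.natDegree_eq_zero_of_isUnit u.isUnit
  have hcc : c.natDegree = 0 := by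
    have h2 : (c ^ 2).natDegree = 0 := by
      have hCe : Polynomial.C e ≠ 0 := fun h0 => (pow_ne_zero 2 hcne) (by
        rw [key2, h0, zero_mul])
      rw [key2, Polynomial.natDegree_mul hCe (pow_ne_zero 2 hdne), Polynomial.natDegree_C,
        natDegree_pow, hdd]
    simpa [natDegree_pow] using h2
  obtain ⟨c₀, hc₀⟩ := Polynomial.natDegree_eq_zero.mp hcc
  obtain ⟨d₀, hd₀⟩ := Polynomial.natDegree_eq_zero.mp hdd
  refine ⟨c₀ / d₀, ?_⟩
  rw [map_div₀, ← hy', ← hc₀, ← hd₀, halgC, halgC]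

lemma half_radical' {f d : k[X]} (hf : f ≠ 0) (h : Associated (d ^ 2) f) :
    2 * (radical f).natDegree ≤ f.natDegree := by
  have hd2 : d ^ 2 ≠ 0 := fun h0 => hf (by
    obtain ⟨u, hu⟩ := h; rw [← hu, h0, zero_mul])
  have hd : d ≠ 0 := fun h0 => hd2 (by rw [h0]; ring)
  have h1 : radical f = radical d := by
    rw [← radical_eq_of_associated h, radical_pow d (by norm_num : 2 ≠ 0)]
  have h2 : f.natDegree = 2 * d.natDegree := by
    obtain ⟨u, hu⟩ := h
    have hu0 : (u : k[X]) ≠ 0 := Units.ne_zero u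
    rw [← hu, Polynomial.natDegree_mul hd2 hu0,
      Polynomial.natDegree_eq_zero_of_isUnit u.isUnit, add_zero, natDegree_pow, mul_comm]
  rw [h1, h2]
  exact Nat.mul_le_mul_left 2 (Polynomial.natDegree_le_of_dvd (radical_dvd_self (a := d)) hd)

lemma y_constant {x y : RatFunc k} (h : y ^ 2 = x ^ 3 - x)
    (sq_const : ∀ {y : RatFunc k} {e : k}, y ^ 2 = algebraMap k (RatFunc k) e →
      y ∈ Set.range (algebraMap k (RatFunc k))) :
    y ∈ Set.range (algebraMap k (RatFunc k)) := by
  rcases eq_or_ne y 0 with rfl | hy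
  · exact ⟨0, by simp⟩
  set a := x.num with ha
  set b := x.denom with hbdef
  have hb : b ≠ 0 := x.denom_ne_zero
  have hab : IsCoprime a b := x.isCoprime_num_denom
  have hx' : algebraMap k[X] (RatFunc k) a / algebraMap k[X] (RatFunc k) b = x :=
    x.num_div_denom
  have hbe : algebraMap k[X] (RatFunc k) b ≠ 0 := RatFunc.algebraMap_ne_zero hb
  have hane : a ≠ 0 := by
    intro h0
    apply hy
    have hx0 : x = 0 := RatFunc.num_eq_zero_iff.mp h0
    have : y ^ 2 = 0 := by rw [h, hx0]; ring
    exact pow_eq_zero_iff (by norm_num) |>.mp this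
  have hamb : a - b ≠ 0 := by
    intro h0
    apply hy
    have hx1 : x = 1 := by
      rw [← hx', sub_eq_zero.mp h0, div_self hbe]
    have : y ^ 2 = 0 := by rw [h, hx1]; ring
    exact pow_eq_zero_iff (by norm_num) |>.mp this
  have hapb : a + b ≠ 0 := by
    intro h0
    apply hy
    have hx1 : x = -1 := by
      rw [← hx', eq_neg_of_add_eq_zero_left h0, map_neg, neg_div, div_self hbe]
    have : y ^ 2 = 0 := by rw [h, hx1]; ring
    exact pow_eq_zero_iff (by norm_num) |>.mp this
  -- w = y * b^2 is a polynomial W with W^2 = a*b*(a-b)*(a+b)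
  set P : k[X] := a * b * (a - b) * (a + b) with hP
  have hw2 : (y * algebraMap k[X] (RatFunc k) b ^ 2) ^ 2 = algebraMap k[X] (RatFunc k) P := by
    rw [hP]
    push_cast [map_mul, map_sub, map_add]
    rw [mul_pow, h, ← hx']
    field_simp
    ring
  obtain ⟨W, hW⟩ : ∃ W : k[X], algebraMap k[X] (RatFunc k) W
      = y * algebraMap k[X] (RatFunc k) b ^ 2 := by
    have hint : IsIntegral k[X] (y * algebraMap k[X] (RatFunc k) b ^ 2) := by
      refine ⟨X ^ 2 - Polynomial.C P, monic_X_pow_sub_C P (by norm_num), ?_⟩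
      simp [Polynomial.eval₂_sub, hw2]
    exact IsIntegrallyClosed.isIntegral_iff.mp hint
  have hWP : W ^ 2 = P := by
    apply RatFunc.algebraMap_injective k
    rw [map_pow, hW, hw2]
  -- pairwise coprimality
  have c_a_amb : IsCoprime a (a - b) := by
    have := hab.neg_right.add_mul_left_right 1
    simpa [mul_one, ← sub_eq_neg_add] using this
  have c_a_apb : IsCoprime a (a + b) := by
    have := hab.add_mul_left_right 1
    simpa [mul_one, add_comm] using this
  have c_b_amb : IsCoprime b (a - b) := by
    have := hab.symm.add_mul_left_right (-1)
    simpa [mul_neg_one, ← sub_eq_add_neg] using this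
  have c_b_apb : IsCoprime b (a + b) := by
    have := hab.symm.add_mul_left_right 1
    simpa [mul_one] using this
  have c_amb_apb : IsCoprime (a - b) (a + b) := by
    obtain ⟨u, v, huv⟩ := hab
    have h2 : Polynomial.C (2 : k) = (2 : k[X]) := map_ofNat _ 2
    have hC : Polynomial.C (2⁻¹ : k) * 2 = 1 := by
      rw [← h2, ← Polynomial.C_mul, inv_mul_cancel₀ (two_ne_zero), Polynomial.C_1]
    exact ⟨Polynomial.C (2⁻¹ : k) * (u - v), Polynomial.C (2⁻¹ : k) * (u + v), by
      linear_combination (2 * Polynomial.C (2⁻¹ : k)) * huv + hC⟩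
  -- each factor is associated to a square
  obtain ⟨d₁, hd₁⟩ : ∃ d, Associated (d ^ 2) a :=
    exists_associated_pow_of_mul_eq_pow' (hab.mul_right (c_a_amb.mul_right c_a_apb))
      (show a * (b * ((a - b) * (a + b))) = W ^ 2 by rw [hWP, hP]; ring)
  obtain ⟨d₂, hd₂⟩ : ∃ d, Associated (d ^ 2) b :=
    exists_associated_pow_of_mul_eq_pow' (hab.symm.mul_right (c_b_amb.mul_right c_b_apb))
      (show b * (a * ((a - b) * (a + b))) = W ^ 2 by rw [hWP, hP]; ring)
  obtain ⟨d₃, hd₃⟩ : ∃ d, Associated (d ^ 2) (a - b) :=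
    exists_associated_pow_of_mul_eq_pow'
      ((c_a_amb.symm.mul_right c_b_amb.symm).mul_right c_amb_apb)
      (show (a - b) * (a * b * (a + b)) = W ^ 2 by rw [hWP, hP]; ring)
  obtain ⟨d₄, hd₄⟩ : ∃ d, Associated (d ^ 2) (a + b) :=
    exists_associated_pow_of_mul_eq_pow'
      ((c_a_apb.symm.mul_right c_b_apb.symm).mul_right c_amb_apb.symm)
      (show (a + b) * (a * b * (a - b)) = W ^ 2 by rw [hWP, hP]; ring)
  -- Mason-Stothers on a^2 + (-(b^2)) + (b^2 - a^2) = 0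
  have hA : a ^ 2 ≠ 0 := pow_ne_zero _ hane
  have hB : -(b ^ 2) ≠ 0 := neg_ne_zero.mpr (pow_ne_zero _ hb)
  have hCne : b ^ 2 - a ^ 2 ≠ 0 := by
    intro h0
    have : (a - b) * (a + b) = 0 := by linear_combination -h0
    rcases mul_eq_zero.mp this with h1 | h1
    exacts [hamb h1, hapb h1]
  have hAB : IsCoprime (a ^ 2) (-(b ^ 2)) := (hab.pow).neg_right
  have hBC : IsCoprime (-(b ^ 2)) (b ^ 2 - a ^ 2) := by
    have h1 : IsCoprime (b ^ 2) (a ^ 2) := hab.symm.pow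
    have h2 := h1.add_mul_left_right (-1)
    have h3 : IsCoprime (b ^ 2) (b ^ 2 - a ^ 2) := by
      have := h2.neg_right
      simpa [mul_neg_one, neg_sub, sub_eq_add_neg, add_comm] using this
    exact h3.neg_left
  have hCA : IsCoprime (b ^ 2 - a ^ 2) (a ^ 2) := by
    have h2 := (hab.pow (n := 2) (m := 2)).add_mul_left_right (-1)
    have : IsCoprime (a ^ 2) (b ^ 2 - a ^ 2) := by
      simpa [mul_neg_one, sub_eq_add_neg, add_comm] using h2
    exact this.symm
  have hsum : a ^ 2 + -(b ^ 2) + (b ^ 2 - a ^ 2) = 0 := by ring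
  rcases Polynomial.abc hA hB hCne hAB hsum with hdeg | hder
  · -- impossible by degree count
    exfalso
    obtain ⟨n1, n2, -⟩ := hdeg
    set R := radical (a ^ 2 * -(b ^ 2) * (b ^ 2 - a ^ 2)) with hR
    -- compute the radical
    have hprod : a ^ 2 * -(b ^ 2) * (b ^ 2 - a ^ 2) = a ^ 2 * (b ^ 2 * ((a - b) * (a + b))) := by
      ring
    have cop1 : IsCoprime (a ^ 2) (b ^ 2 * ((a - b) * (a + b))) :=
      ((hab.pow_right).mul_right (c_a_amb.mul_right c_a_apb)).pow_left
    have cop2 : IsCoprime (b ^ 2) ((a - b) * (a + b)) :=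
      (c_b_amb.mul_right c_b_apb).pow_left
    have hradR : R = radical a * (radical b * (radical (a - b) * radical (a + b))) := by
      rw [hR, hprod, radical_mul cop1.isRelPrime, radical_mul cop2.isRelPrime, radical_mul c_amb_apb.isRelPrime,
        radical_pow a (by norm_num : 2 ≠ 0), radical_pow b (by norm_num : 2 ≠ 0)]
    have hndR : R.natDegree = (radical a).natDegree + ((radical b).natDegree
        + ((radical (a - b)).natDegree + (radical (a + b)).natDegree)) := by
      rw [hradR, Polynomial.natDegree_mul (radical_ne_zero (a := a)) (by
          exact mul_ne_zero (radical_ne_zero (a := b))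
            (mul_ne_zero (radical_ne_zero (a := (a - b))) (radical_ne_zero (a := (a + b))))),
        Polynomial.natDegree_mul (radical_ne_zero (a := b))
          (mul_ne_zero (radical_ne_zero (a := (a - b))) (radical_ne_zero (a := (a + b)))),
        Polynomial.natDegree_mul (radical_ne_zero (a := (a - b))) (radical_ne_zero (a := (a + b)))]
    have B1 : 2 * (radical a).natDegree ≤ a.natDegree := half_radical' hane hd₁
    have B2 : 2 * (radical b).natDegree ≤ b.natDegree := half_radical' hb hd₂
    have B3 : 2 * (radical (a - b)).natDegree ≤ (a - b).natDegree := half_radical' hamb hd₃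
    have B4 : 2 * (radical (a + b)).natDegree ≤ (a + b).natDegree := half_radical' hapb hd₄
    rw [natDegree_pow] at n1
    rw [natDegree_neg, natDegree_pow] at n2
    have hsub : (a - b).natDegree ≤ max a.natDegree b.natDegree := natDegree_sub_le a b
    have hadd : (a + b).natDegree ≤ max a.natDegree b.natDegree := natDegree_add_le a b
    rcases le_total a.natDegree b.natDegree with hM | hM
    · rw [max_eq_right hM] at hsub hadd; omega
    · rw [max_eq_left hM] at hsub hadd; omega
  · -- derivatives zero: a, b are constants
    obtain ⟨hda, hdb, -⟩ := hder
    have hna : a.natDegree = 0 := by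
      have := Polynomial.natDegree_eq_zero_of_derivative_eq_zero hda
      simpa [natDegree_pow] using this
    have hnb : b.natDegree = 0 := by
      have := Polynomial.natDegree_eq_zero_of_derivative_eq_zero hdb
      simpa [natDegree_pow, natDegree_neg] using this
    obtain ⟨a₀, ha₀⟩ := Polynomial.natDegree_eq_zero.mp hna
    obtain ⟨b₀, hb₀⟩ := Polynomial.natDegree_eq_zero.mp hnb
    have hxc : x = algebraMap k (RatFunc k) (a₀ / b₀) := by
      rw [← hx', ← ha₀, ← hb₀, RatFunc.algebraMap_C, RatFunc.algebraMap_C,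
        ← RatFunc.algebraMap_eq_C, ← map_div₀]
    apply sq_const (e := (a₀ / b₀) ^ 3 - (a₀ / b₀))
    rw [h, hxc, map_sub, map_pow]

end MasonStothers

section Padic

variable {p : ℕ} [Fact p.Prime] {K : Type*} [Field K] [Algebra ℚ_[p] K]
  [FiniteDimensional ℚ_[p] K]

-- every sufficiently small (w.r.t. a fixed linear identification) element of K
-- is a y-coordinate on y² = x³ - x
lemma small_is_y_coord :
    ∃ ε : ℝ, 0 < ε ∧ ∀ y : K, ‖(Module.finBasis ℚ_[p] K).equivFun y‖ < ε →
      ∃ x : K, x ^ 3 - x = y ^ 2 := by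
  classical
  set n := Module.finrank ℚ_[p] K
  set e : K ≃ₗ[ℚ_[p]] (Fin n → ℚ_[p]) := (Module.finBasis ℚ_[p] K).equivFun with he
  -- the multiplication as a continuous bilinear map
  let m : (Fin n → ℚ_[p]) →ₗ[ℚ_[p]] (Fin n → ℚ_[p]) →ₗ[ℚ_[p]] (Fin n → ℚ_[p]) :=
    LinearMap.mk₂ ℚ_[p] (fun u v => e (e.symm u * e.symm v))
      (by intro u u' v; simp [add_mul])
      (by intro s u v; simp [smul_mul_assoc])
      (by intro u v v'; simp [mul_add])
      (by intro s u v; simp [mul_smul_comm])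
  let M : (Fin n → ℚ_[p]) →L[ℚ_[p]] (Fin n → ℚ_[p]) →L[ℚ_[p]] (Fin n → ℚ_[p]) :=
    LinearMap.toContinuousLinearMap
      ((LinearMap.toContinuousLinearMap :
        ((Fin n → ℚ_[p]) →ₗ[ℚ_[p]] (Fin n → ℚ_[p])) ≃ₗ[ℚ_[p]]
          ((Fin n → ℚ_[p]) →L[ℚ_[p]] (Fin n → ℚ_[p]))).toLinearMap.comp m)
  have hM : ∀ u v, M u v = e (e.symm u * e.symm v) := fun u v => rfl
  set C : ℝ := max ‖M‖ 1 with hC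
  have hC1 : (1:ℝ) ≤ C := le_max_right _ _
  have hC0 : (0:ℝ) < C := lt_of_lt_of_le one_pos hC1
  have hMb : ∀ u v, ‖M u v‖ ≤ C * ‖u‖ * ‖v‖ := by
    intro u v
    calc ‖M u v‖ ≤ ‖M‖ * ‖u‖ * ‖v‖ := M.le_opNorm₂ u v
    _ ≤ C * ‖u‖ * ‖v‖ := by
        apply mul_le_mul_of_nonneg_right (mul_le_mul_of_nonneg_right (le_max_left _ _)
          (norm_nonneg u)) (norm_nonneg v)
  set r : ℝ := (3 * C)⁻¹ with hrdef
  have hr0 : 0 < r := by positivity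
  have hCr : C * r = 3⁻¹ := by rw [hrdef]; field_simp
  refine ⟨min 1 (r / (2 * C)), by positivity, ?_⟩
  intro y hy
  set Y : Fin n → ℚ_[p] := e (y * y) with hYdef
  have hey1 : ‖e y‖ ≤ 1 := le_of_lt (lt_of_lt_of_le hy (min_le_left _ _))
  have hey2 : ‖e y‖ ≤ r / (2 * C) := le_of_lt (lt_of_lt_of_le hy (min_le_right _ _))
  have hey0 : (0:ℝ) ≤ ‖e y‖ := norm_nonneg _
  have hY : ‖Y‖ ≤ r / 2 := by
    have h1 : ‖Y‖ ≤ C * ‖e y‖ * ‖e y‖ := by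
      have := hMb (e y) (e y)
      rwa [hM, e.symm_apply_apply] at this
    calc ‖Y‖ ≤ C * ‖e y‖ * ‖e y‖ := h1
    _ ≤ C * (r / (2 * C)) * 1 := by
        apply mul_le_mul (mul_le_mul le_rfl hey2 hey0 (le_of_lt hC0)) hey1 hey0
        positivity
    _ = r / 2 := by field_simp
  set f : (Fin n → ℚ_[p]) → (Fin n → ℚ_[p]) := fun v => M v (M v v) - Y with hfdef
  set s : Set (Fin n → ℚ_[p]) := Metric.closedBall 0 r with hsdef
  have hnorm_cube : ∀ v : Fin n → ℚ_[p], ‖v‖ ≤ r → ‖M v (M v v)‖ ≤ r / 9 := by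
    intro v hv
    have h1 : ‖M v (M v v)‖ ≤ C * ‖v‖ * (C * ‖v‖ * ‖v‖) :=
      le_trans (hMb _ _) (by
        apply mul_le_mul_of_nonneg_left (hMb v v) (by positivity))
    have hv0 : (0:ℝ) ≤ ‖v‖ := norm_nonneg v
    calc ‖M v (M v v)‖ ≤ C * ‖v‖ * (C * ‖v‖ * ‖v‖) := h1
    _ = C * ‖v‖ * (C * ‖v‖) * ‖v‖ := by ring
    _ ≤ C * r * (C * r) * r := by
        have h1 : C * ‖v‖ ≤ C * r := mul_le_mul_of_nonneg_left hv (le_of_lt hC0)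
        have h2 : (0:ℝ) ≤ C * ‖v‖ := by positivity
        have h3 : (0:ℝ) ≤ C * r := by positivity
        exact mul_le_mul (mul_le_mul h1 h1 h2 h3) hv hv0 (by positivity)
    _ = r / 9 := by rw [hCr]; ring
  have hsf : Set.MapsTo f s s := by
    intro v hv
    rw [hsdef, Metric.mem_closedBall, dist_zero_right] at hv ⊢
    calc ‖f v‖ ≤ ‖M v (M v v)‖ + ‖Y‖ := norm_sub_le _ _
    _ ≤ r / 9 + r / 2 := add_le_add (hnorm_cube v hv) hY
    _ ≤ r := by linarith
  have hsc : IsComplete s := (Metric.isClosed_closedBall).isComplete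
  have hlip : ∀ v ∈ s, ∀ w ∈ s, dist (f v) (f w) ≤ 3⁻¹ * dist v w := by
    intro v hv w hw
    rw [hsdef, Metric.mem_closedBall, dist_zero_right] at hv hw
    have key : f v - f w = M (v - w) (M v v) + (M w (M (v - w) v) + M w (M w (v - w))) := by
      simp only [hfdef, map_sub, ContinuousLinearMap.sub_apply]
      abel
    have hv0 : (0:ℝ) ≤ ‖v‖ := norm_nonneg v
    have hw0 : (0:ℝ) ≤ ‖w‖ := norm_nonneg w
    have hvw0 : (0:ℝ) ≤ ‖v - w‖ := norm_nonneg _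
    have b1 : ‖M (v - w) (M v v)‖ ≤ C * ‖v - w‖ * (C * ‖v‖ * ‖v‖) :=
      le_trans (hMb _ _) (mul_le_mul_of_nonneg_left (hMb v v) (by positivity))
    have b2 : ‖M w (M (v - w) v)‖ ≤ C * ‖w‖ * (C * ‖v - w‖ * ‖v‖) :=
      le_trans (hMb _ _) (mul_le_mul_of_nonneg_left (hMb _ _) (by positivity))
    have b3 : ‖M w (M w (v - w))‖ ≤ C * ‖w‖ * (C * ‖w‖ * ‖v - w‖) :=
      le_trans (hMb _ _) (mul_le_mul_of_nonneg_left (hMb _ _) (by positivity))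
    have key2 : ∀ z1 z2 : ℝ, 0 ≤ z1 → 0 ≤ z2 → z1 ≤ r → z2 ≤ r →
        (C * z1) * (C * z2) ≤ (C * r) * (C * r) := fun z1 z2 h1 h2 h3 h4 =>
      mul_le_mul (mul_le_mul_of_nonneg_left h3 hC0.le)
        (mul_le_mul_of_nonneg_left h4 hC0.le) (by positivity) (by positivity)
    have T1 : ‖M (v - w) (M v v)‖ ≤ (C * r) * (C * r) * ‖v - w‖ := by
      calc ‖M (v - w) (M v v)‖ ≤ C * ‖v - w‖ * (C * ‖v‖ * ‖v‖) := b1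
      _ = (C * ‖v‖) * (C * ‖v‖) * ‖v - w‖ := by ring
      _ ≤ (C * r) * (C * r) * ‖v - w‖ :=
          mul_le_mul_of_nonneg_right (key2 _ _ hv0 hv0 hv hv) hvw0
    have T2 : ‖M w (M (v - w) v)‖ ≤ (C * r) * (C * r) * ‖v - w‖ := by
      calc ‖M w (M (v - w) v)‖ ≤ C * ‖w‖ * (C * ‖v - w‖ * ‖v‖) := b2
      _ = (C * ‖w‖) * (C * ‖v‖) * ‖v - w‖ := by ring
      _ ≤ (C * r) * (C * r) * ‖v - w‖ :=
          mul_le_mul_of_nonneg_right (key2 _ _ hw0 hv0 hw hv) hvw0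
    have T3 : ‖M w (M w (v - w))‖ ≤ (C * r) * (C * r) * ‖v - w‖ := by
      calc ‖M w (M w (v - w))‖ ≤ C * ‖w‖ * (C * ‖w‖ * ‖v - w‖) := b3
      _ = (C * ‖w‖) * (C * ‖w‖) * ‖v - w‖ := by ring
      _ ≤ (C * r) * (C * r) * ‖v - w‖ :=
          mul_le_mul_of_nonneg_right (key2 _ _ hw0 hw0 hw hw) hvw0
    have hCr2 : C * r * (C * r) = 3⁻¹ * 3⁻¹ := by rw [hCr]
    rw [dist_eq_norm, dist_eq_norm, key]
    calc ‖M (v - w) (M v v) + (M w (M (v - w) v) + M w (M w (v - w)))‖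
        ≤ ‖M (v - w) (M v v)‖ + (‖M w (M (v - w) v)‖ + ‖M w (M w (v - w))‖) :=
          le_trans (norm_add_le _ _) (by
            exact add_le_add le_rfl (norm_add_le _ _))
    _ ≤ 3 * ((C * r) * (C * r)) * ‖v - w‖ := by linarith
    _ = 3⁻¹ * ‖v - w‖ := by rw [hCr2]; ring
  -- Banach fixed point
  have hcontr : ContractingWith (3⁻¹ : NNReal) (hsf.restrict f s s) := by
    constructor
    · rw [← NNReal.coe_lt_coe]
      push_cast
      norm_num
    · apply LipschitzWith.of_dist_le_mul
      rintro ⟨v, hv⟩ ⟨w, hw⟩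
      rw [Subtype.dist_eq]
      simp only [Set.MapsTo.val_restrict_apply]
      have := hlip v hv w hw
      rw [NNReal.coe_inv]
      push_cast
      exact this
  obtain ⟨v, hvs, hfix, -⟩ := hcontr.exists_fixedPoint' hsc hsf
    (Metric.mem_closedBall_self hr0.le) (edist_ne_top _ _)
  refine ⟨e.symm v, ?_⟩
  have hveq : M v (M v v) - Y = v := hfix
  have := congrArg e.symm hveq
  rw [map_sub, hM, hM, e.symm_apply_apply, e.symm_apply_apply, hYdef,
    e.symm_apply_apply] at this
  set x := e.symm v
  linear_combination this

end Padic

lemma exists_pair {p : ℕ} [Fact p.Prime] {K : Type*} [Field K] [Algebra ℚ_[p] K]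
    [FiniteDimensional ℚ_[p] K] (c : K) : ∃ y₂ : K, y₂ ≠ 0 ∧ (∃ x : K, x ^ 3 - x = (c * y₂) ^ 2) ∧
    (∃ x : K, x ^ 3 - x = y₂ ^ 2) := by
  obtain ⟨ε, hε, hs⟩ := small_is_y_coord (p := p) (K := K)
  set e := (Module.finBasis ℚ_[p] K).equivFun with he
  have hp1 : ‖(p : ℚ_[p])‖ < 1 := Padic.norm_p_lt_one
  have hden : (0:ℝ) < max ‖e c‖ ‖e 1‖ + 1 := by positivity
  obtain ⟨N, hN⟩ := exists_pow_lt_of_lt_one (x := ε / (max ‖e c‖ ‖e 1‖ + 1))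
    (by positivity) hp1
  set t : ℝ := ‖(p : ℚ_[p])‖ with ht
  have ht0 : (0:ℝ) ≤ t := norm_nonneg _
  have htN : (0:ℝ) ≤ t ^ N := pow_nonneg ht0 N
  have hNbound : t ^ N * (max ‖e c‖ ‖e 1‖ + 1) < ε := by
    rw [← lt_div_iff₀ hden]
    exact hN
  refine ⟨algebraMap ℚ_[p] K ((p : ℚ_[p]) ^ N), ?_, ?_, ?_⟩
  · have hpne : ((p : ℚ_[p]) ^ N) ≠ 0 :=
      pow_ne_zero _ (Nat.cast_ne_zero.mpr (Fact.out : p.Prime).ne_zero)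
    exact fun h => hpne ((_root_.map_eq_zero _).mp h)
  · apply hs
    have hcy : c * algebraMap ℚ_[p] K ((p : ℚ_[p]) ^ N) = ((p : ℚ_[p]) ^ N) • c := by
      rw [Algebra.smul_def]; ring
    rw [hcy, map_smul, norm_smul, norm_pow, ← ht]
    calc t ^ N * ‖e c‖ ≤ t ^ N * (max ‖e c‖ ‖e 1‖ + 1) := by
          apply mul_le_mul_of_nonneg_left _ htN
          exact le_trans (le_max_left _ _) (by linarith)
    _ < ε := hNbound
  · apply hs
    have hcy : algebraMap ℚ_[p] K ((p : ℚ_[p]) ^ N) = ((p : ℚ_[p]) ^ N) • (1 : K) := by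
      rw [Algebra.algebraMap_eq_smul_one]
    rw [hcy, map_smul, norm_smul, norm_pow, ← ht]
    calc t ^ N * ‖e 1‖ ≤ t ^ N * (max ‖e c‖ ‖e 1‖ + 1) := by
          apply mul_le_mul_of_nonneg_left _ htN
          exact le_trans (le_max_right _ _) (by linarith)
    _ < ε := hNbound



/-- Proposition `csts-dioph`: let `K` be a p-adic field. Inside `K(t)`, the set of constants
(the image of `K`) equals the set of quotients `y₁/y₂` with `y₂ ≠ 0` where `y₁, y₂` are
`y`-coordinates of points of the elliptic curve `y² = x³ - x` over `K(t)`. In particular,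
`K` is a diophantine subset of `K(t)`. -/
theorem stmt_15 (p : ℕ) [Fact p.Prime]
    (K : Type*) [Field K] [Algebra ℚ_[p] K] [FiniteDimensional ℚ_[p] K] :
    Set.range (algebraMap K (RatFunc K)) =
      {z : RatFunc K | ∃ y₁ y₂ x₁ x₂ : RatFunc K,
        y₂ ≠ 0 ∧ y₁ ^ 2 = x₁ ^ 3 - x₁ ∧ y₂ ^ 2 = x₂ ^ 3 - x₂ ∧ z = y₁ / y₂} := by
  haveI : CharZero K := charZero_of_injective_algebraMap (algebraMap ℚ_[p] K).injective
  letI : DecidableEq K := Classical.decEq K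
  ext z
  constructor
  · rintro ⟨c, rfl⟩
    obtain ⟨y₂, hy₂, ⟨x₁, hx₁⟩, ⟨x₂, hx₂⟩⟩ := exists_pair (p := p) c
    refine ⟨algebraMap K (RatFunc K) (c * y₂), algebraMap K (RatFunc K) y₂,
      algebraMap K (RatFunc K) x₁, algebraMap K (RatFunc K) x₂, ?_, ?_, ?_, ?_⟩
    · exact fun h => hy₂ ((_root_.map_eq_zero _).mp h)
    · rw [← map_pow, ← map_pow, hx₁.symm, map_sub, map_pow]
    · rw [← map_pow, ← map_pow, hx₂.symm, map_sub, map_pow]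
    · rw [← map_div₀, mul_div_assoc, div_self hy₂, mul_one]
  · rintro ⟨y₁, y₂, x₁, x₂, hy₂, h1, h2, rfl⟩
    obtain ⟨c₁, hc₁⟩ := y_constant h1 (fun h => sq_const h)
    obtain ⟨c₂, hc₂⟩ := y_constant h2 (fun h => sq_const h)
    exact ⟨c₁ / c₂, by rw [map_div₀, hc₁, hc₂]⟩
end
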